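/- Let ⟨x,y⟩₁ = −x₀y₀ + x₁y₁ + x₂y₂ + x₃y₃ + x₄y₄ denote the Lorentzian bilinear form on ℝ⁵. Let a be a nonzero real number and b a real number with b/a − 1/(4a²) − 1 ≥ 0, and define Θ(t,u) = (a(t² + u²) + b, t, u, √(b/a − 1/(4a²) − 1), a(t² + u²) − 1/(2a) + b). Then for all (t,u): ⟨Θ, Θ⟩₁ = −1 (so Θ takes values in H⁴ = {x ∈ ℝ⁵ : ⟨x,x⟩₁ = −1}), and ⟨∂ₜΘ, ∂ₜΘ⟩₁ = 1, ⟨∂ᵤΘ, ∂ᵤΘ⟩₁ = 1, ⟨∂ₜΘ, ∂ᵤΘ⟩₁ = 0. -/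

import Mathlib

set_option maxHeartbeats 1000000


/-- The Lorentzian bilinear form on `ℝ⁵` with timelike coordinate `x₀`. -/
def lor5 (x y : Fin 5 → ℝ) : ℝ :=
  -(x 0 * y 0) + x 1 * y 1 + x 2 * y 2 + x 3 * y 3 + x 4 * y 4

/-- Case (4) of Proposition 4.3: the paraboloid-type surface in a lightlike
direction is a unit-speed orthogonal parametrization lying in `H⁴ ⊂ ℝ⁵₁`. -/
theorem stmt_10 (a b : ℝ) (ha : a ≠ 0)
    (hb : b / a - 1 / (4 * a ^ 2) - 1 ≥ 0)
    (Θ : ℝ → ℝ → Fin 5 → ℝ)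
    (hΘ : ∀ t u : ℝ, Θ t u =
      ![a * (t ^ 2 + u ^ 2) + b, t, u,
        Real.sqrt (b / a - 1 / (4 * a ^ 2) - 1),
        a * (t ^ 2 + u ^ 2) - 1 / (2 * a) + b]) :
    ∀ t u : ℝ,
      lor5 (Θ t u) (Θ t u) = -1 ∧
      lor5 (deriv (fun t' => Θ t' u) t) (deriv (fun t' => Θ t' u) t) = 1 ∧
      lor5 (deriv (fun u' => Θ t u') u) (deriv (fun u' => Θ t u') u) = 1 ∧
      lor5 (deriv (fun t' => Θ t' u) t) (deriv (fun u' => Θ t u') u) = 0 := by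
  intro t u
  have hss : Real.sqrt (b / a - 1 / (4 * a ^ 2) - 1) *
      Real.sqrt (b / a - 1 / (4 * a ^ 2) - 1) =
      b / a - 1 / (4 * a ^ 2) - 1 := Real.mul_self_sqrt hb
  have hdt : HasDerivAt (fun t' => Θ t' u) ![2 * a * t, 1, 0, 0, 2 * a * t] t := by
    have h : HasDerivAt (fun t' => ![a * (t' ^ 2 + u ^ 2) + b, t', u,
        Real.sqrt (b / a - 1 / (4 * a ^ 2) - 1),
        a * (t' ^ 2 + u ^ 2) - 1 / (2 * a) + b])
        ![2 * a * t, 1, 0, 0, 2 * a * t] t := by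
      rw [hasDerivAt_pi]
      have h1 : HasDerivAt (fun t' : ℝ => a * (t' ^ 2 + u ^ 2)) (2 * a * t) t := by
        have := ((hasDerivAt_pow 2 t).add_const (u ^ 2)).const_mul a
        simpa [mul_comm, mul_assoc, mul_left_comm] using this
      intro i
      fin_cases i
      · simpa using h1.add_const b
      · simpa using hasDerivAt_id' t
      · simpa using hasDerivAt_const t u
      · simp only [Matrix.cons_val_three, Matrix.tail_cons, Matrix.head_cons]
        exact hasDerivAt_const _ _
      · simpa [sub_eq_add_neg, add_assoc] using h1.add_const (-(1 / (2 * a)) + b)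
    exact h.congr_of_eventuallyEq (by filter_upwards with t' using hΘ t' u)
  have hdu : HasDerivAt (fun u' => Θ t u') ![2 * a * u, 0, 1, 0, 2 * a * u] u := by
    have h : HasDerivAt (fun u' => ![a * (t ^ 2 + u' ^ 2) + b, t, u',
        Real.sqrt (b / a - 1 / (4 * a ^ 2) - 1),
        a * (t ^ 2 + u' ^ 2) - 1 / (2 * a) + b])
        ![2 * a * u, 0, 1, 0, 2 * a * u] u := by
      rw [hasDerivAt_pi]
      have h1 : HasDerivAt (fun u' : ℝ => a * (t ^ 2 + u' ^ 2)) (2 * a * u) u := by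
        have := ((hasDerivAt_pow 2 u).const_add (t ^ 2)).const_mul a
        simpa [mul_comm, mul_assoc, mul_left_comm] using this
      intro i
      fin_cases i
      · simpa using h1.add_const b
      · simpa using hasDerivAt_const u t
      · simpa using hasDerivAt_id' u
      · simp only [Matrix.cons_val_three, Matrix.tail_cons, Matrix.head_cons]
        exact hasDerivAt_const _ _
      · simpa [sub_eq_add_neg, add_assoc] using h1.add_const (-(1 / (2 * a)) + b)
    exact h.congr_of_eventuallyEq (by filter_upwards with u' using hΘ t u')
  rw [hdt.deriv, hdu.deriv, hΘ t u]
  refine ⟨?_, ?_, ?_, ?_⟩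
  · simp only [lor5, Matrix.cons_val_zero, Matrix.cons_val_one, Matrix.head_cons,
      Matrix.cons_val_two, Matrix.tail_cons, Matrix.cons_val_three, Matrix.cons_val_four]
    rw [hss]
    field_simp
    ring
  · simp [lor5]
  · simp [lor5]
  · simp [lor5]
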